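/- Let μ, ν be finite monotone measures such that (μ, ν) has the decomposition property with respect to {A_α}_{α∈ℚ≥0} and lim_{α→∞} max(μ(A_α), ν(A_α)) = 0. Define f(x) = sup{α ∈ ℚ≥0 : x ∈ A_α}. Then f is measurable and μ(A) = ∫_A f dν for every measurable A. -/

import Mathlib

open MeasureTheory Filter Set
open scoped NNReal ENNReal NNRat

variable {U : Type*}

instance : Countable ℚ≥0 := Subtype.countable

/-- The Choquet integral of `f` w.r.t. the set function `ν` on the set `A`:
`∫₀^∞ ν({f ≥ t} ∩ A) dt`. -/
noncomputable def Choquet [MeasurableSpace U] (ν : Set U → ENNReal) (f : U → ENNReal)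
    (A : Set U) : ENNReal :=
  ∫⁻ t in Set.Ioi (0 : ℝ), ν ({x | ENNReal.ofReal t ≤ f x} ∩ A)

/-- A monotone measure: vanishes at `∅` and is monotone on measurable sets. -/
def IsMonotoneMeasure [MeasurableSpace U] (ν : Set U → ENNReal) : Prop :=
  ν ∅ = 0 ∧ ∀ A B : Set U, MeasurableSet A → MeasurableSet B → A ⊆ B → ν A ≤ ν B

/-- The decomposition inequalities for the ordered pair `(μ, ν)` w.r.t. a family
`A : NNRat → Set U`, stated additively (no truncated subtraction):
`α(ν(S∩A_α) − ν(S∩A_β)) ≤ μ(S∩A_α) − μ(S∩A_β) ≤ β(ν(S∩A_α) − ν(S∩A_β))`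
for all measurable `S` of finite `μ`- and `ν`-measure and rationals `α < β`. -/
def DecompIneq [MeasurableSpace U] (μ ν : Set U → ENNReal) (A : NNRat → Set U) : Prop :=
  ∀ S : Set U, MeasurableSet S → μ S ≠ ⊤ → ν S ≠ ⊤ →
    ∀ α β : NNRat, α < β →
      (((α : ℝ≥0) : ENNReal) * ν (S ∩ A α) + μ (S ∩ A β)
          ≤ μ (S ∩ A α) + ((α : ℝ≥0) : ENNReal) * ν (S ∩ A β)) ∧
      (μ (S ∩ A α) + ((β : ℝ≥0) : ENNReal) * ν (S ∩ A β)
          ≤ ((β : ℝ≥0) : ENNReal) * ν (S ∩ A α) + μ (S ∩ A β))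

/-- The decomposition property: a decreasing family of measurable sets with `A 0 = univ`
satisfying the decomposition inequalities. -/
def DecompProp [MeasurableSpace U] (μ ν : Set U → ENNReal) (A : NNRat → Set U) : Prop :=
  (∀ α, MeasurableSet (A α)) ∧ A 0 = Set.univ ∧ Antitone A ∧ DecompIneq μ ν A

/-- Comonotonicity for `ℝ≥0∞`-valued functions. -/
def Comonotone (f g : U → ENNReal) : Prop :=
  ∀ s t : U, (f s ≤ f t ∧ g s ≤ g t) ∨ (f t ≤ f s ∧ g t ≤ g s)

theorem decomp_implies_rn [MeasurableSpace U] (μ ν : Set U → ENNReal)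
    (hμ : IsMonotoneMeasure μ) (hν : IsMonotoneMeasure ν)
    (hμfin : μ Set.univ ≠ ⊤) (hνfin : ν Set.univ ≠ ⊤)
    (A : NNRat → Set U) (hd : DecompProp μ ν A)
    (ht : Tendsto (fun α : NNRat => max (μ (A α)) (ν (A α))) atTop (nhds 0)) :
    Measurable (fun x => ⨆ q : NNRat, (A q).indicator (fun _ => ((q : ℝ≥0) : ENNReal)) x) ∧
    ∀ S : Set U, MeasurableSet S →
      μ S = Choquet ν
        (fun x => ⨆ q : NNRat, (A q).indicator (fun _ => ((q : ℝ≥0) : ENNReal)) x) S := by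
  obtain ⟨hAm, hA0, hAanti, hdec⟩ := hd
  set f : U → ENNReal := fun x => ⨆ q : NNRat, (A q).indicator (fun _ => ((q : ℝ≥0) : ENNReal)) x with hf
  have hfmeas : Measurable f := by
    apply Measurable.iSup
    intro q
    exact Measurable.indicator measurable_const (hAm q)
  refine ⟨hfmeas, ?_⟩
  -- basic limits
  have hμ0 : Tendsto (fun α : NNRat => μ (A α)) atTop (nhds 0) := by
    apply tendsto_of_tendsto_of_tendsto_of_le_of_le tendsto_const_nhds ht (fun _ => zero_le)
      (fun α => le_max_left _ _)
  have hν0 : Tendsto (fun α : NNRat => ν (A α)) atTop (nhds 0) := by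
    apply tendsto_of_tendsto_of_tendsto_of_le_of_le tendsto_const_nhds ht (fun _ => zero_le)
      (fun α => le_max_right _ _)
  -- level set lemmas
  have hmem_of_le : ∀ (x : U) (t : ℝ) (p : NNRat), ENNReal.ofReal t ≤ f x → (p:ℝ) < t → x ∈ A p := by
    intro x t p hle hp
    have h1 : ((p : ℝ≥0) : ENNReal) < f x := by
      refine lt_of_lt_of_le ?_ hle
      rw [ENNReal.lt_ofReal_iff_toReal_lt (by simp)]
      rw [ENNReal.coe_toReal]; exact hp
    rw [hf] at h1
    simp only [lt_iSup_iff] at h1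
    obtain ⟨q, hq⟩ := h1
    by_cases hx : x ∈ A q
    · rw [Set.indicator_of_mem hx] at hq
      have hpq : p ≤ q := by exact_mod_cast hq.le
      exact hAanti hpq hx
    · rw [Set.indicator_of_notMem hx] at hq
      exact absurd hq (by simp)
  have hle_of_mem : ∀ (x : U) (t : ℝ) (q : NNRat), x ∈ A q → t ≤ (q:ℝ) → ENNReal.ofReal t ≤ f x := by
    intro x t q hx hle
    have h1 : ENNReal.ofReal t ≤ ((q : ℝ≥0) : ENNReal) := by
      rw [← ENNReal.ofReal_coe_nnreal]
      apply ENNReal.ofReal_le_ofReal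
      exact hle
    refine h1.trans ?_
    rw [hf]
    exact le_iSup_of_le q (by rw [Set.indicator_of_mem hx])
  intro S hS
  -- abbreviations
  set g : NNRat → ENNReal := fun α => μ (S ∩ A α) with hg
  set h : NNRat → ENNReal := fun α => ν (S ∩ A α) with hh
  have hSA : ∀ α, MeasurableSet (S ∩ A α) := fun α => hS.inter (hAm α)
  have hgfin : ∀ α, g α ≠ ⊤ := fun α =>
    (lt_of_le_of_lt (hμ.2 _ _ (hSA α) MeasurableSet.univ (subset_univ _)) hμfin.lt_top).ne
  have hhfin : ∀ α, h α ≠ ⊤ := fun α =>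
    (lt_of_le_of_lt (hν.2 _ _ (hSA α) MeasurableSet.univ (subset_univ _)) hνfin.lt_top).ne
  have hganti : Antitone g := fun α β hab =>
    hμ.2 _ _ (hSA β) (hSA α) (inter_subset_inter_right _ (hAanti hab))
  have hhanti : Antitone h := fun α β hab =>
    hν.2 _ _ (hSA β) (hSA α) (inter_subset_inter_right _ (hAanti hab))
  have hg0 : g 0 = μ S := by rw [hg]; simp [hA0]
  have hgA : ∀ α, g α ≤ μ (A α) := fun α => hμ.2 _ _ (hSA α) (hAm α) inter_subset_right
  have hhA : ∀ α, h α ≤ ν (A α) := fun α => hν.2 _ _ (hSA α) (hAm α) inter_subset_right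
  have hhle : ∀ α, h α ≤ ν univ := fun α => hν.2 _ _ (hSA α) MeasurableSet.univ (subset_univ _)
  have hdecS : ∀ α β : NNRat, α < β →
      (((α : ℝ≥0) : ENNReal) * h α + g β ≤ g α + ((α : ℝ≥0) : ENNReal) * h β) ∧
      (g α + ((β : ℝ≥0) : ENNReal) * h β ≤ ((β : ℝ≥0) : ENNReal) * h α + g β) := by
    intro α β hab
    exact hdec S hS (by simpa [hg, hA0] using hgfin 0) (by simpa [hh, hA0] using hhfin 0) α β hab
  -- key lemma : α * h α ≤ g α
  have hkey : ∀ α : NNRat, ((α : ℝ≥0) : ENNReal) * h α ≤ g α := by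
    intro α
    have htend : Tendsto (fun β : NNRat => g α + ((α : ℝ≥0) : ENNReal) * ν (A β)) atTop
        (nhds (g α)) := by
      have h2 : Tendsto (fun β : NNRat => ((α : ℝ≥0) : ENNReal) * ν (A β)) atTop
          (nhds (((α : ℝ≥0) : ENNReal) * 0)) :=
        ENNReal.Tendsto.const_mul hν0 (Or.inr ENNReal.coe_ne_top)
      rw [mul_zero] at h2
      simpa using tendsto_const_nhds.add h2
    refine ge_of_tendsto htend ?_
    filter_upwards [eventually_gt_atTop α] with β hβ
    have h1 := (hdecS α β hβ).1
    calc ((α : ℝ≥0) : ENNReal) * h α ≤ ((α : ℝ≥0) : ENNReal) * h α + g β := le_self_add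
      _ ≤ g α + ((α : ℝ≥0) : ENNReal) * h β := h1
      _ ≤ g α + ((α : ℝ≥0) : ENNReal) * ν (A β) := by
          gcongr
          exact hhA β
  -- the squeezing function
  set H : ℝ → ENNReal := fun t => ν ({x | ENNReal.ofReal t ≤ f x} ∩ S) with hH
  have hlev : ∀ t : ℝ, MeasurableSet {x | ENNReal.ofReal t ≤ f x} := by
    intro t
    exact hfmeas measurableSet_Ici
  have hHanti : Antitone H := by
    intro t₁ t₂ h12
    refine hν.2 _ _ ((hlev t₂).inter hS) ((hlev t₁).inter hS) ?_
    refine inter_subset_inter_left _ ?_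
    intro x hx
    exact le_trans (ENNReal.ofReal_le_ofReal h12) hx
  have hH_le : ∀ (t : ℝ) (p : NNRat), (p:ℝ) < t → H t ≤ h p := by
    intro t p hp
    refine hν.2 _ _ ((hlev t).inter hS) (hSA p) ?_
    rintro x ⟨hx1, hx2⟩
    exact ⟨hx2, hmem_of_le x t p hx1 hp⟩
  have hle_H : ∀ (t : ℝ) (q : NNRat), t ≤ (q:ℝ) → h q ≤ H t := by
    intro t q hq
    refine hν.2 _ _ (hSA q) ((hlev t).inter hS) ?_
    rintro x ⟨hx1, hx2⟩
    exact ⟨hle_of_mem x t q hx2 hq, hx1⟩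
  -- partition machinery
  have main : ∀ n : ℕ, 0 < n →
      (Choquet ν f S ≤ μ S + (n : ENNReal)⁻¹ * ν univ) ∧
      (μ S ≤ Choquet ν f S + (n : ENNReal)⁻¹ * ν univ) := by
    intro n hn
    set δ : ENNReal := (n : ENNReal)⁻¹ with hδ
    set c : ℕ → NNRat := fun i => (i : NNRat) / (n : NNRat) with hc
    set e : ℕ → ENNReal := fun i => (i : ENNReal) * δ with he
    have hn' : (n : NNRat) ≠ 0 := by exact_mod_cast hn.ne'
    have hce : ∀ i, (((c i : ℝ≥0)) : ENNReal) = e i := by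
      intro i
      simp only [hc, he, hδ]
      push_cast
      rw [ENNReal.coe_div (by exact_mod_cast hn.ne')]
      push_cast
      rw [div_eq_mul_inv]
    have hclt : ∀ i : ℕ, c i < c (i + 1) := by
      intro i
      apply div_lt_div_of_pos_right ?_ ?_
      · exact_mod_cast Nat.lt_succ_self i
      · exact_mod_cast hn
    have hcmono : Monotone c := by
      intro i j hij
      simp only [hc]
      gcongr
    set a : ℕ → ENNReal := fun i => h (c i) with ha
    set G : ℕ → ENNReal := fun i => g (c i) with hG
    have hafin : ∀ i, a i ≠ ⊤ := fun i => hhfin _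
    have hGfin : ∀ i, G i ≠ ⊤ := fun i => hgfin _
    have hefin : ∀ i, e i ≠ ⊤ := by
      intro i; rw [he]
      exact ENNReal.mul_ne_top (by simp) (by simp [hδ, ENNReal.inv_ne_top]; exact_mod_cast hn.ne')
    have hL : ∀ i : ℕ, e i * a i + G (i+1) ≤ G i + e i * a (i+1) := by
      intro i
      have := (hdecS (c i) (c (i+1)) (hclt i)).1
      rwa [hce i] at this
    have hU : ∀ i : ℕ, G i + e (i+1) * a (i+1) ≤ e (i+1) * a i + G (i+1) := by
      intro i
      have := (hdecS (c i) (c (i+1)) (hclt i)).2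
      rwa [hce (i+1)] at this
    have he_succ : ∀ i : ℕ, e (i + 1) = e i + δ := by
      intro i; rw [he]; push_cast; ring
    -- upper telescoping : P'
    have hc0 : c 0 = 0 := by simp [hc]
    have hG0 : G 0 = μ S := by simp only [hG]; rw [hc0]; exact hg0
    have he0 : e 0 = 0 := by simp [he]
    have hP : ∀ m : ℕ, δ * (∑ i ∈ Finset.range m, a i) + G m + δ * a m
        ≤ μ S + δ * a 0 + e m * a m := by
      intro m
      induction m with
      | zero => simp [hG0, he0]
      | succ m ih =>
        have hfin1 : G m + e m * a m ≠ ⊤ :=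
          ENNReal.add_ne_top.mpr ⟨hGfin m, ENNReal.mul_ne_top (hefin m) (hafin m)⟩
        have h3 : δ * (∑ i ∈ Finset.range m, a i) + δ * a m + G (m+1)
            ≤ μ S + δ * a 0 + e m * a (m+1) := by
          rw [← ENNReal.add_le_add_iff_right hfin1]
          calc δ * (∑ i ∈ Finset.range m, a i) + δ * a m + G (m+1) + (G m + e m * a m)
              = (δ * (∑ i ∈ Finset.range m, a i) + G m + δ * a m) + (e m * a m + G (m+1)) := by
                ring
            _ ≤ (μ S + δ * a 0 + e m * a m) + (G m + e m * a (m+1)) := add_le_add ih (hL m)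
            _ = μ S + δ * a 0 + e m * a (m+1) + (G m + e m * a m) := by ring
        calc δ * (∑ i ∈ Finset.range (m+1), a i) + G (m+1) + δ * a (m+1)
            = (δ * (∑ i ∈ Finset.range m, a i) + δ * a m + G (m+1)) + δ * a (m+1) := by
              rw [Finset.sum_range_succ]; ring
          _ ≤ (μ S + δ * a 0 + e m * a (m+1)) + δ * a (m+1) := add_le_add_left h3 _
          _ = μ S + δ * a 0 + e (m+1) * a (m+1) := by rw [he_succ]; ring
    -- lower telescoping : Q
    have hQ : ∀ m : ℕ, μ S + e m * a m ≤ δ * (∑ i ∈ Finset.range m, a i) + G m := by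
      intro m
      induction m with
      | zero => simp [hG0, he0]
      | succ m ih =>
        have hfin1 : e m * a m + G m ≠ ⊤ :=
          ENNReal.add_ne_top.mpr ⟨ENNReal.mul_ne_top (hefin m) (hafin m), hGfin m⟩
        rw [← ENNReal.add_le_add_iff_right hfin1]
        calc μ S + e (m+1) * a (m+1) + (e m * a m + G m)
            = (μ S + e m * a m) + (G m + e (m+1) * a (m+1)) := by ring
          _ ≤ (δ * (∑ i ∈ Finset.range m, a i) + G m) + (e (m+1) * a m + G (m+1)) :=
              add_le_add ih (hU m)
          _ = δ * (∑ i ∈ Finset.range (m+1), a i) + G (m+1) + (e m * a m + G m) := by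
              rw [Finset.sum_range_succ, he_succ]; ring
    -- integral vs sums
    have hnR : (0:ℝ) < n := by exact_mod_cast hn
    have hcR : ∀ i : ℕ, ((c i : ℝ)) = (i : ℝ) / n := by
      intro i; simp only [hc]; push_cast; ring
    have hcRmono : ∀ i j : ℕ, i ≤ j → ((c i : ℝ)) ≤ ((c j : ℝ)) := by
      intro i j hij
      rw [hcR, hcR]
      gcongr
    have hIoi : Set.Ioi (0:ℝ) = ⋃ i : ℕ, Set.Ioc ((c i : ℝ)) ((c (i+1) : ℝ)) := by
      ext t
      simp only [mem_Ioi, mem_iUnion, mem_Ioc]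
      constructor
      · intro htpos
        have htn : 0 < t * n := by positivity
        set k := ⌈t * n⌉₊ with hk
        have hk1 : 1 ≤ k := Nat.one_le_ceil_iff.mpr htn
        have hkup : t * n ≤ (k : ℝ) := Nat.le_ceil _
        have hklo : (k : ℝ) < t * n + 1 := Nat.ceil_lt_add_one htn.le
        refine ⟨k - 1, ?_, ?_⟩
        · rw [hcR, div_lt_iff₀ hnR]
          have hks : ((k-1:ℕ):ℝ) = (k:ℝ) - 1 := by
            rw [Nat.cast_sub hk1]; simp
          rw [hks]; linarith
        · rw [hcR, le_div_iff₀ hnR]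
          have hks : (k - 1 + 1 : ℕ) = k := Nat.succ_pred_eq_of_pos hk1
          rw [hks]; linarith
      · rintro ⟨i, h1, _⟩
        have h0 : (0:ℝ) ≤ ((c i : ℝ)) := by
          rw [hcR]; positivity
        linarith
    have hsplit : Choquet ν f S = ∑' i : ℕ, ∫⁻ t in Set.Ioc ((c i : ℝ)) ((c (i+1) : ℝ)), H t := by
      have hdisj : Pairwise (Function.onFun Disjoint fun i : ℕ => Set.Ioc ((c i : ℝ)) ((c (i+1) : ℝ))) := by
        intro i j hij
        rcases hij.lt_or_gt with hlt | hlt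
        · refine Set.Ioc_disjoint_Ioc.mpr ?_
          exact le_trans (min_le_left _ _) (le_trans (hcRmono _ _ hlt) (le_max_right _ _))
        · refine Set.Ioc_disjoint_Ioc.mpr ?_
          exact le_trans (min_le_right _ _) (le_trans (hcRmono _ _ hlt) (le_max_left _ _))
      have h1 : Choquet ν f S = ∫⁻ t in Set.Ioi (0:ℝ), H t := rfl
      rw [h1, hIoi, lintegral_iUnion (fun i => measurableSet_Ioc) hdisj]
    have hvol : ∀ i : ℕ, (volume (Set.Ioc ((c i : ℝ)) ((c (i+1) : ℝ)))) = δ := by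
      intro i
      rw [Real.volume_Ioc, hcR, hcR]
      have h1 : ((i+1:ℕ):ℝ)/n - (i:ℝ)/n = ((n:ℝ))⁻¹ := by
        push_cast; field_simp; ring
      rw [h1, ENNReal.ofReal_inv_of_pos hnR, ENNReal.ofReal_natCast, hδ]
    have hpiece_le : ∀ i : ℕ, ∫⁻ t in Set.Ioc ((c i : ℝ)) ((c (i+1) : ℝ)), H t ≤ δ * a i := by
      intro i
      calc ∫⁻ t in Set.Ioc ((c i : ℝ)) ((c (i+1) : ℝ)), H t
          ≤ ∫⁻ _ in Set.Ioc ((c i : ℝ)) ((c (i+1) : ℝ)), a i :=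
            setLIntegral_mono measurable_const (fun t htm => hH_le t (c i) htm.1)
        _ = a i * δ := by rw [setLIntegral_const, hvol]
        _ = δ * a i := mul_comm _ _
    have hle_piece : ∀ i : ℕ, δ * a (i+1) ≤ ∫⁻ t in Set.Ioc ((c i : ℝ)) ((c (i+1) : ℝ)), H t := by
      intro i
      calc δ * a (i+1) = a (i+1) * δ := mul_comm _ _
        _ = ∫⁻ _ in Set.Ioc ((c i : ℝ)) ((c (i+1) : ℝ)), a (i+1) := by
            rw [setLIntegral_const, hvol]
        _ ≤ ∫⁻ t in Set.Ioc ((c i : ℝ)) ((c (i+1) : ℝ)), H t :=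
            setLIntegral_mono hHanti.measurable (fun t htm => hle_H t (c (i+1)) htm.2)
    have hcTop : Tendsto c atTop atTop := by
      have hpos : (0:NNRat) < (n:NNRat) := by positivity
      exact Tendsto.atTop_div_const hpos tendsto_natCast_atTop_atTop
    have hμAc : Tendsto (fun m : ℕ => μ (A (c m))) atTop (nhds 0) := hμ0.comp hcTop
    have hema : ∀ m : ℕ, e m * a m ≤ G m := by
      intro m
      rw [← hce m]
      exact hkey (c m)
    have ha0 : a 0 ≤ ν univ := hhle _
    constructor
    · -- Choquet ≤ μ S + δ ν univ
      have claim1 : ∀ m : ℕ, δ * (∑ i ∈ Finset.range m, a i) ≤ μ S + δ * a 0 + μ (A (c m)) := by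
        intro m
        calc δ * (∑ i ∈ Finset.range m, a i)
            ≤ δ * (∑ i ∈ Finset.range m, a i) + G m + δ * a m := by
              rw [add_assoc]; exact le_self_add
          _ ≤ μ S + δ * a 0 + e m * a m := hP m
          _ ≤ μ S + δ * a 0 + G m := by gcongr; exact hema m
          _ ≤ μ S + δ * a 0 + μ (A (c m)) := by gcongr; exact hgA _
      have claim1' : ∀ m : ℕ, δ * (∑ i ∈ Finset.range m, a i) ≤ μ S + δ * a 0 := by
        intro m
        have htend2 : Tendsto (fun m' : ℕ => μ S + δ * a 0 + μ (A (c m'))) atTop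
            (nhds (μ S + δ * a 0)) := by
          simpa using tendsto_const_nhds.add hμAc
        refine ge_of_tendsto htend2 ?_
        filter_upwards [eventually_ge_atTop m] with m' hm'
        calc δ * (∑ i ∈ Finset.range m, a i) ≤ δ * (∑ i ∈ Finset.range m', a i) :=
              mul_le_mul_right (Finset.sum_le_sum_of_subset (Finset.range_subset_range.mpr hm')) δ
          _ ≤ μ S + δ * a 0 + μ (A (c m')) := claim1 m'
      calc Choquet ν f S = ∑' i : ℕ, ∫⁻ t in Set.Ioc ((c i : ℝ)) ((c (i+1) : ℝ)), H t := hsplit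
        _ ≤ ∑' i : ℕ, δ * a i := ENNReal.tsum_le_tsum hpiece_le
        _ = ⨆ m : ℕ, ∑ i ∈ Finset.range m, δ * a i :=
            ENNReal.tsum_eq_iSup_sum' (fun m => Finset.range m)
              (fun t => t.exists_nat_subset_range)
        _ ≤ μ S + δ * ν univ := by
            refine iSup_le fun m => ?_
            rw [← Finset.mul_sum]
            exact le_trans (claim1' m) (by gcongr)
    · -- μ S ≤ Choquet + δ ν univ
      have claim2 : ∀ m : ℕ, μ S ≤ Choquet ν f S + δ * ν univ + μ (A (c m)) := by
        intro m
        have hsum : δ * (∑ i ∈ Finset.range m, a i)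
            ≤ δ * a 0 + ∑ i ∈ Finset.range m, δ * a (i+1) := by
          rw [← Finset.mul_sum, ← mul_add]
          have h2 : (∑ i ∈ Finset.range m, a i) ≤ a 0 + ∑ i ∈ Finset.range m, a (i+1) := by
            calc (∑ i ∈ Finset.range m, a i) ≤ ∑ i ∈ Finset.range (m+1), a i :=
                  Finset.sum_le_sum_of_subset (Finset.range_subset_range.mpr (Nat.le_succ m))
              _ = (∑ i ∈ Finset.range m, a (i+1)) + a 0 := Finset.sum_range_succ' a m
              _ = a 0 + ∑ i ∈ Finset.range m, a (i+1) := add_comm _ _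
          exact mul_le_mul_right h2 δ
        have hsum2 : ∑ i ∈ Finset.range m, δ * a (i+1) ≤ Choquet ν f S := by
          calc ∑ i ∈ Finset.range m, δ * a (i+1)
              ≤ ∑ i ∈ Finset.range m, ∫⁻ t in Set.Ioc ((c i : ℝ)) ((c (i+1) : ℝ)), H t :=
                Finset.sum_le_sum (fun i _ => hle_piece i)
            _ ≤ ∑' i : ℕ, ∫⁻ t in Set.Ioc ((c i : ℝ)) ((c (i+1) : ℝ)), H t :=
                ENNReal.sum_le_tsum _
            _ = Choquet ν f S := hsplit.symm
        calc μ S ≤ μ S + e m * a m := le_self_add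
          _ ≤ δ * (∑ i ∈ Finset.range m, a i) + G m := hQ m
          _ ≤ (δ * a 0 + ∑ i ∈ Finset.range m, δ * a (i+1)) + μ (A (c m)) := by
              gcongr
              exact hgA _
          _ ≤ (δ * ν univ + Choquet ν f S) + μ (A (c m)) := by gcongr
          _ = Choquet ν f S + δ * ν univ + μ (A (c m)) := by ring
      have htend2 : Tendsto (fun m : ℕ => Choquet ν f S + δ * ν univ + μ (A (c m))) atTop
          (nhds (Choquet ν f S + δ * ν univ)) := by
        simpa using tendsto_const_nhds.add hμAc
      exact ge_of_tendsto htend2 (Eventually.of_forall claim2)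
  -- conclude by n → ∞
  have htend : Tendsto (fun n : ℕ => (n : ENNReal)⁻¹ * ν univ) atTop (nhds 0) := by
    have := ENNReal.Tendsto.mul_const ENNReal.tendsto_inv_nat_nhds_zero (Or.inr hνfin)
    simpa using this
  apply le_antisymm
  · -- μ S ≤ Choquet
    have : Tendsto (fun n : ℕ => Choquet ν f S + (n : ENNReal)⁻¹ * ν univ) atTop
        (nhds (Choquet ν f S)) := by
      simpa using (tendsto_const_nhds.add htend)
    refine ge_of_tendsto this ?_
    filter_upwards [eventually_gt_atTop 0] with n hn using (main n hn).2
  · have : Tendsto (fun n : ℕ => μ S + (n : ENNReal)⁻¹ * ν univ) atTop (nhds (μ S)) := by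
      simpa using (tendsto_const_nhds.add htend)
    refine ge_of_tendsto this ?_
    filter_upwards [eventually_gt_atTop 0] with n hn using (main n hn).1
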